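/- Let p be an odd prime and suppose n divides p^t + 1 for some positive integer t with (p^t+1)/n an odd integer. Then every irreducible factor of X^n + 1 over F_p of degree at least 2 has even degree. -/

import Mathlib

open Polynomial

/-- if `n ∣ p^t + 1` with `(p^t+1)/n` odd, then every irreducible factor of
`X^n + 1` over `F_p` of degree at least 2 has even degree. -/
theorem stmt9 (p n t : ℕ) [Fact p.Prime] (hp : Odd p) (ht : 0 < t) (hn : 0 < n)
    (hdvd : n ∣ p ^ t + 1) (hq : Odd ((p ^ t + 1) / n))
    (f : Polynomial (ZMod p)) (hf : Irreducible f)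
    (hfd : f ∣ X ^ n + 1) (hdeg : 2 ≤ f.natDegree) :
    Even f.natDegree := by
  by_contra hodd
  rw [Nat.not_even_iff_odd] at hodd
  haveI hfact : Fact (Irreducible f) := ⟨hf⟩
  have hf0 : f ≠ 0 := hf.ne_zero
  set K := AdjoinRoot f with hK
  set α : K := AdjoinRoot.root f with hα
  -- α^n = -1
  have hroot : α ^ n = -1 := by
    have h0 : (aeval α) (X ^ n + 1 : (ZMod p)[X]) = 0 := by
      rw [AdjoinRoot.aeval_eq, AdjoinRoot.mk_eq_zero]; exact hfd
    have h1 : α ^ n + 1 = 0 := by simpa using h0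
    linear_combination h1
  have hα0 : α ≠ 0 := by
    intro h
    rw [h, zero_pow hn.ne'] at hroot
    exact one_ne_zero (neg_eq_zero.mp hroot.symm)
  -- α ^ (p^t) = -α⁻¹
  obtain ⟨q, hq'⟩ := hdvd
  have hqodd : Odd q := by
    rwa [hq', Nat.mul_div_cancel_left _ hn] at hq
  have hkey : α ^ p ^ t = -α⁻¹ := by
    have h1 : α ^ (p ^ t + 1) = -1 := by
      rw [hq', pow_mul, hroot, hqodd.neg_one_pow]
    have h2 : α ^ p ^ t * α = -1 := by
      rw [← h1, pow_succ]
    rw [eq_neg_iff_add_eq_zero, ← mul_left_inj' hα0, add_mul, inv_mul_cancel₀ hα0, zero_mul]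
    linear_combination h2
  have hptodd : ∀ m : ℕ, Odd (p ^ m) := fun m => hp.pow
  -- α ^ (p ^ (2t)) = α
  have h2t : α ^ p ^ (2 * t) = α := by
    have : α ^ p ^ (2 * t) = (α ^ p ^ t) ^ p ^ t := by
      rw [← pow_mul, ← pow_add, two_mul]
    rw [this, hkey, (hptodd t).neg_pow, inv_pow, hkey, inv_neg, inv_inv, neg_neg]
  -- induction: α ^ p ^ ((2k+1)t) = -α⁻¹
  have hind : ∀ k : ℕ, α ^ p ^ ((2 * k + 1) * t) = -α⁻¹ := by
    intro k
    induction k with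
    | zero => simpa using hkey
    | succ k ih =>
      have he : (2 * (k + 1) + 1) * t = (2 * k + 1) * t + 2 * t := by ring
      rw [he, pow_add, pow_mul, ih, (hptodd _).neg_pow, inv_pow, h2t]
  -- K is a finite field of cardinality p ^ d
  haveI : FiniteDimensional (ZMod p) K :=
    PowerBasis.finite (AdjoinRoot.powerBasis hf0)
  haveI : Finite K := Module.finite_of_finite (ZMod p)
  haveI : Fintype K := Fintype.ofFinite K
  have hdim : Module.finrank (ZMod p) K = f.natDegree := by
    rw [(AdjoinRoot.powerBasis hf0).finrank, AdjoinRoot.powerBasis_dim]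
  have hcard : Fintype.card K = p ^ f.natDegree := by
    rw [Module.card_eq_pow_finrank (K := ZMod p), ZMod.card, hdim]
  -- Frobenius^d fixes everything
  have hfix : α ^ p ^ (f.natDegree * t) = α := by
    have := FiniteField.pow_card_pow t α
    rwa [hcard, ← pow_mul] at this
  -- d odd ⟹ α = -α⁻¹ ⟹ α² = -1
  obtain ⟨m, hm⟩ := hodd
  have h3 : α ^ p ^ (f.natDegree * t) = -α⁻¹ := by rw [hm]; exact hind m
  rw [hfix] at h3
  have : α = -α⁻¹ := h3
  have hsq : α ^ 2 = -1 := by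
    have := congrArg (· * α) this
    rw [neg_mul, inv_mul_cancel₀ hα0] at this
    rw [sq]
    linear_combination this
  -- so the minimal polynomial of α divides X^2 + 1, hence d ≤ 2
  have haev : (aeval α) (X ^ 2 + 1 : (ZMod p)[X]) = 0 := by
    simp [hsq]
  have hmin : minpoly (ZMod p) α ∣ (X ^ 2 + 1 : (ZMod p)[X]) :=
    minpoly.dvd _ _ haev
  have hmineq : minpoly (ZMod p) α = f * C f.leadingCoeff⁻¹ := AdjoinRoot.minpoly_root hf0
  have hdegmin : (minpoly (ZMod p) α).natDegree = f.natDegree := by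
    rw [hmineq, natDegree_mul_C]
    intro h
    exact (leadingCoeff_ne_zero.mpr hf0) (by simpa using congrArg (f.leadingCoeff * ·) h)
  have hle : f.natDegree ≤ 2 := by
    have h21 : (X ^ 2 + 1 : (ZMod p)[X]) ≠ 0 := by
      intro h
      have := congrArg (fun g => g.coeff 2) h
      simp [coeff_one] at this
    have := natDegree_le_of_dvd hmin h21
    rw [hdegmin] at this
    calc f.natDegree ≤ (X ^ 2 + 1 : (ZMod p)[X]).natDegree := this
      _ ≤ 2 := natDegree_add_le_of_degree_le (by simp) (by simp)
  have : f.natDegree = 2 := le_antisymm hle hdeg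
  rw [this] at hm
  omega
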